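/- Let n ≥ 1 and suppose X_1, …, X_h ∈ R satisfy f^{(n)}(X_i) = 0 for all i. Then g^{(n)}(μ_n(X_1, …, X_h)) = 0. -/

import Mathlib

open Finset

noncomputable section

/-- The Moore determinant `μ(X₁, …, X_h) = det (Xᵢ^{q^{j-1}})`. -/
def moore (q : ℕ) {h : ℕ} {R : Type*} [CommRing R] (X : Fin h → R) : R :=
  Matrix.det (Matrix.of fun i j : Fin h => X i ^ q ^ (j : ℕ))

/-- `f(X) = πX + u₁X^q + ⋯ + u_{h−1}X^{q^{h−1}} + X^{q^h}`. -/
def fmap (q h : ℕ) {R : Type*} [CommRing R] (π : R) (u : ℕ → R) (X : R) : R :=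
  π * X + (∑ k ∈ Finset.Ico 1 h, u k * X ^ q ^ k) + X ^ q ^ h

/-- `μ_n(X₁, …, X_h) = Σ μ(f^(a₁)(X₁), …, f^(a_h)(X_h))`, the sum over all tuples
`(a₁, …, a_h)` with `0 ≤ aᵢ ≤ n−1` and `a₁ + ⋯ + a_h = (h−1)(n−1)`. -/
def mooreN (q h n : ℕ) {R : Type*} [CommRing R] (π : R) (u : ℕ → R) (X : Fin h → R) : R :=
  ∑ a ∈ Finset.univ.filter
      (fun a : Fin h → Fin n => ∑ i, (a i : ℕ) = (h - 1) * (n - 1)),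
    moore q (fun i => (fmap q h π u)^[(a i : ℕ)] (X i))

/-- `g(T) = πT + (−1)^{h−1}T^q`. -/
def gmap (q h : ℕ) {R : Type*} [CommRing R] (π : R) (T : R) : R :=
  π * T + (-1) ^ (h - 1) * T ^ q

section Aux

open Polynomial

variable {R : Type*} [CommRing R]

/-- The generating polynomial `P(t) = ∑_{a<n} f^(a)(x) t^a`. -/
private noncomputable def auxP (n : ℕ) (f : R → R) (x : R) : R[X] :=
  ∑ a ∈ Finset.range n, C (f^[a] x) * X ^ a

/-- The coefficientwise `q`-power Frobenius on `R[t]`. -/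
private noncomputable def auxTau (R : Type*) [CommRing R] (p e : ℕ) [ExpChar R p] :
    R[X] →+* R[X] :=
  Polynomial.mapRingHom (iterateFrobenius R p e)

private lemma auxTau_coeff (p e : ℕ) [ExpChar R p] (F : R[X]) (m : ℕ) :
    (auxTau R p e F).coeff m = (F.coeff m) ^ p ^ e := by
  simp [auxTau, Polynomial.coeff_map, iterateFrobenius_def]

private lemma auxTau_X (p e : ℕ) [ExpChar R p] : auxTau R p e X = X := by simp [auxTau]

private lemma auxTau_pow_P (p e : ℕ) [ExpChar R p] (n : ℕ) (f : R → R) (x : R) :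
    ∀ j : ℕ, ((auxTau R p e) ^ j) (auxP n f x)
      = ∑ a ∈ Finset.range n, C ((f^[a] x) ^ (p ^ e) ^ j) * X ^ a := by
  intro j
  induction j with
  | zero => simp [auxP]
  | succ j ih =>
      rw [pow_succ']
      show auxTau R p e (((auxTau R p e) ^ j) (auxP n f x)) = _
      rw [ih, map_sum]
      refine Finset.sum_congr rfl fun a _ => ?_
      simp only [auxTau, Polynomial.coe_mapRingHom, Polynomial.map_mul, Polynomial.map_C,
        Polynomial.map_pow, Polynomial.map_X, iterateFrobenius_def]
      rw [← pow_mul, ← pow_succ]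

private lemma coeff_sum_C_mul_X_pow (n : ℕ) (r : ℕ → R) (c : ℕ) :
    (∑ a ∈ Finset.range n, C (r a) * X ^ a).coeff c = if c < n then r c else 0 := by
  rw [Polynomial.finset_sum_coeff]
  simp only [Polynomial.coeff_C_mul, Polynomial.coeff_X_pow, mul_ite, mul_one, mul_zero]
  rw [Finset.sum_ite_eq (Finset.range n) c r]
  simp only [Finset.mem_range]

private lemma auxP_coeff (n : ℕ) (f : R → R) (x : R) (c : ℕ) :
    (auxP n f x).coeff c = if c < n then f^[c] x else 0 := by
  rw [auxP, coeff_sum_C_mul_X_pow]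

private lemma auxP_natDegree_le (n : ℕ) (c : ℕ → R) :
    (∑ a ∈ Finset.range n, C (c a) * X ^ a).natDegree ≤ n - 1 := by
  refine Polynomial.natDegree_sum_le_of_forall_le _ _ fun a ha => ?_
  refine (Polynomial.natDegree_C_mul_X_pow_le _ _).trans ?_
  have := Finset.mem_range.mp ha
  omega

private lemma coeff_det_eq_zero {h : ℕ} (A : Matrix (Fin h) (Fin h) R[X]) (b : Fin h → ℕ)
    (hA : ∀ j i, (A j i).natDegree ≤ b j) (m : ℕ) (hm : ∑ j, b j < m) :
    (A.det).coeff m = 0 := by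
  rw [Matrix.det_apply, Polynomial.finset_sum_coeff]
  refine Finset.sum_eq_zero fun σ _ => ?_
  have hdeg : (∏ i, A (σ i) i).natDegree ≤ ∑ j, b j := by
    refine (Polynomial.natDegree_prod_le _ _).trans ?_
    calc ∑ i, (A (σ i) i).natDegree ≤ ∑ i, b (σ i) :=
          Finset.sum_le_sum fun i _ => hA (σ i) i
      _ = ∑ j, b j := Equiv.sum_comp σ b
  have h0 : (∏ i, A (σ i) i).coeff m = 0 :=
    Polynomial.coeff_eq_zero_of_natDegree_lt (lt_of_le_of_lt hdeg hm)
  rw [Polynomial.coeff_smul, h0, smul_zero]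

private lemma det_updateRow_finsum {h : ℕ} (M : Matrix (Fin h) (Fin h) R[X]) (j : Fin h)
    {α : Type*} [DecidableEq α] (s : Finset α) (v : α → Fin h → R[X]) :
    (M.updateRow j (∑ k ∈ s, v k)).det = ∑ k ∈ s, (M.updateRow j (v k)).det := by
  induction s using Finset.induction_on with
  | empty =>
      rw [Finset.sum_empty, Finset.sum_empty]
      exact Matrix.det_eq_zero_of_row_eq_zero j (by simp)
  | @insert a s hk ih =>
      rw [Finset.sum_insert hk, Finset.sum_insert hk, Matrix.det_updateRow_add, ih]

/-- The matrix `M_{j i} = τ^j P_i`. -/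
private noncomputable def matM (p e : ℕ) [ExpChar R p] (m n : ℕ) (f : R → R)
    (X : Fin (m+1) → R) : Matrix (Fin (m+1)) (Fin (m+1)) R[X] :=
  Matrix.of fun j i => ((auxTau R p e) ^ (j : ℕ)) (auxP n f (X i))

/-- `g_τ(F) = πF + (-1)^{h-1} τ F`. -/
private noncomputable def gtau (p e hh : ℕ) [ExpChar R p] (π : R) (F : R[X]) : R[X] :=
  C π * F + (-1) ^ (hh - 1) * auxTau R p e F

private lemma matM_natDegree_le (p e : ℕ) [ExpChar R p] (m n : ℕ) (f : R → R)
    (X : Fin (m+1) → R) (j i : Fin (m+1)) :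
    (matM p e m n f X j i).natDegree ≤ n - 1 := by
  rw [matM, Matrix.of_apply, auxTau_pow_P]
  exact auxP_natDegree_le n _

/-- The fundamental recurrence `det M = det N + t ⬝ g_τ(det M)`. -/
private lemma det_rec (p e : ℕ) [ExpChar R p] (m n : ℕ) (π : R) (u : ℕ → R)
    (X : Fin (m+1) → R) (hX : ∀ i, (fmap (p ^ e) (m + 1) π u)^[n] (X i) = 0) :
    (matM p e m n (fmap (p ^ e) (m + 1) π u) X).det
      = ((matM p e m n (fmap (p ^ e) (m + 1) π u) X).updateRow 0
          (fun i => Polynomial.C (X i))).det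
        + Polynomial.X * gtau p e (m + 1) π (matM p e m n (fmap (p ^ e) (m + 1) π u) X).det := by
  set f := fmap (p ^ e) (m + 1) π u with hf
  set M := matM p e m n f X with hM
  set T := auxTau R p e with hT
  have hM0 : M 0 = fun i => auxP n f (X i) := by
    funext i
    show (T ^ ((0 : Fin (m+1)) : ℕ)) (auxP n f (X i)) = _
    simp
  -- scalar relation
  have hrel : ∀ i, auxP n f (X i)
      = Polynomial.C (X i) + Polynomial.X *
          (Polynomial.C π * auxP n f (X i)
            + (∑ k ∈ Finset.Ico 1 (m+1), Polynomial.C (u k) * (T ^ k) (auxP n f (X i)))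
            + (T ^ (m+1)) (auxP n f (X i))) := by
    intro i
    have key : Polynomial.C π * auxP n f (X i)
        + (∑ k ∈ Finset.Ico 1 (m+1), Polynomial.C (u k) * (T ^ k) (auxP n f (X i)))
        + (T ^ (m+1)) (auxP n f (X i))
        = ∑ a ∈ Finset.range n, Polynomial.C (f^[a+1] (X i)) * Polynomial.X ^ a := by
      rw [hT]
      ext c
      rw [coeff_add, coeff_add, Polynomial.coeff_C_mul, Polynomial.finset_sum_coeff]
      simp only [Polynomial.coeff_C_mul, auxTau_pow_P, coeff_sum_C_mul_X_pow, auxP_coeff]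
      by_cases hc : c < n
      · simp only [hc, if_true]
        rw [Function.iterate_succ_apply']
        simp [hf, fmap]
      · simp [hc]
    rw [key]
    have h2 : Polynomial.X * (∑ a ∈ Finset.range n, Polynomial.C (f^[a+1] (X i)) * Polynomial.X ^ a)
        = auxP n f (X i) - Polynomial.C (X i) := by
      rw [Finset.mul_sum]
      rw [Finset.sum_congr rfl fun a _ =>
        (show Polynomial.X * (Polynomial.C (f^[a+1] (X i)) * Polynomial.X ^ a)
            = Polynomial.C (f^[a+1] (X i)) * Polynomial.X ^ (a+1) by ring)]
      have hs := Finset.sum_range_succ' (fun b => Polynomial.C (f^[b] (X i)) * Polynomial.X ^ b) n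
      rw [Finset.sum_range_succ] at hs
      simp only [Function.iterate_zero, id_eq, pow_zero, mul_one] at hs
      have hgn : Polynomial.C (f^[n] (X i)) * Polynomial.X ^ n = 0 := by
        rw [hX i]; simp
      rw [hgn, add_zero] at hs
      rw [auxP]
      linear_combination -hs
    rw [h2]
    ring
  -- the row decomposition
  have hrow : M 0 = (fun i => Polynomial.C (X i))
      + (Polynomial.X : R[X]) • ((Polynomial.C π • fun i => auxP n f (X i))
          + (∑ k ∈ Finset.Ico 1 (m+1), Polynomial.C (u k) • fun i => (T ^ k) (auxP n f (X i)))
          + fun i => (T ^ (m+1)) (auxP n f (X i))) := by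
    funext i
    simp only [hM0, Pi.add_apply, Pi.smul_apply, Finset.sum_apply, smul_eq_mul]
    linear_combination hrel i
  -- the three determinants
  have d1 : (M.updateRow 0 (Polynomial.C π • fun i => auxP n f (X i))).det
      = Polynomial.C π * M.det := by
    rw [Matrix.det_updateRow_smul, ← hM0, Matrix.updateRow_eq_self]
  have d2 : ∀ k ∈ Finset.Ico 1 (m+1),
      (M.updateRow 0 (Polynomial.C (u k) • fun i => (T ^ k) (auxP n f (X i)))).det = 0 := by
    intro k hk
    obtain ⟨hk1, hk2⟩ := Finset.mem_Ico.mp hk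
    rw [Matrix.det_updateRow_smul]
    have hrowk : (fun i => (T ^ k) (auxP n f (X i))) = M ⟨k, hk2⟩ := by
      funext i; rfl
    rw [hrowk, Matrix.det_updateRow_eq_zero (by
      intro hcon
      have : (⟨k, hk2⟩ : Fin (m+1)) = 0 := hcon
      have : k = 0 := congrArg Fin.val this
      omega), mul_zero]
  have d3 : (M.updateRow 0 (fun i => (T ^ (m+1)) (auxP n f (X i)))).det
      = (-1)^m * T M.det := by
    have hmat : M.updateRow 0 (fun i => (T ^ (m+1)) (auxP n f (X i)))
        = (M.map T).submatrix ((finRotate (m+1))⁻¹ : Equiv.Perm (Fin (m+1))) id := by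
      refine Matrix.ext fun j i => ?_
      rcases eq_or_ne j 0 with rfl | hj
      · rw [Matrix.updateRow_self]
        have hσ0 : (finRotate (m+1))⁻¹ 0 = Fin.last m := by
          rw [Equiv.Perm.inv_def, Equiv.symm_apply_eq, finRotate_succ_apply, Fin.last_add_one]
        simp only [Matrix.submatrix_apply, hσ0, Matrix.map_apply, id_eq]
        show (T ^ (m+1)) _ = T ((T ^ ((Fin.last m : ℕ))) _)
        rw [Fin.val_last, pow_succ']
        rfl
      · rw [Matrix.updateRow_ne hj]
        have hσ : (finRotate (m+1))⁻¹ j = j - 1 := by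
          rw [Equiv.Perm.inv_def, Equiv.symm_apply_eq, finRotate_succ_apply, sub_add_cancel]
        simp only [Matrix.submatrix_apply, hσ, Matrix.map_apply, id_eq]
        show (T ^ (j : ℕ)) _ = T ((T ^ (((j - 1 : Fin (m+1))) : ℕ)) _)
        have hj1 : ((j - 1 : Fin (m+1)) : ℕ) + 1 = (j : ℕ) := by
          rw [Fin.coe_sub_one, if_neg hj]
          have : (j : ℕ) ≠ 0 := fun hc => hj (Fin.ext hc)
          omega
        rw [← hj1, pow_succ']
        rfl
    rw [hmat, Matrix.det_permute, map_inv, sign_finRotate,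
      show (M.map ⇑T).det = T M.det from by rw [← RingHom.mapMatrix_apply, ← RingHom.map_det]]
    simp [inv_pow]
  -- assemble
  conv_lhs => rw [show M = M.updateRow 0 (M 0) from (Matrix.updateRow_eq_self M 0).symm, hrow]
  rw [Matrix.det_updateRow_add, Matrix.det_updateRow_smul,
    Matrix.det_updateRow_add, Matrix.det_updateRow_add,
    det_updateRow_finsum M 0 (Finset.Ico 1 (m+1))
      (fun k => Polynomial.C (u k) • fun i => (T ^ k) (auxP n f (X i))),
    Finset.sum_eq_zero d2, d1, d3]
  rw [gtau]
  push_cast [Nat.add_sub_cancel]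
  ring

/-- Extracting a coefficient of `det M` gives a sum of Moore determinants. -/
private lemma coeff_det_matM (p e : ℕ) [ExpChar R p] (m n : ℕ) (f : R → R)
    (X : Fin (m+1) → R) (s : ℕ) :
    ((matM p e m n f X).det).coeff s
      = ∑ a ∈ Finset.univ.filter (fun a : Fin (m+1) → Fin n => ∑ i, (a i : ℕ) = s),
          moore (p^e) (fun i => f^[(a i : ℕ)] (X i)) := by
  classical
  rw [← Matrix.det_transpose]
  have hMT : (matM p e m n f X).transpose
      = Matrix.of fun i => ∑ a : Fin n,
          ((Polynomial.X : R[X]) ^ (a : ℕ) •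
            fun j : Fin (m+1) => Polynomial.C ((f^[(a : ℕ)] (X i)) ^ ((p^e) ^ (j : ℕ)))) := by
    refine Matrix.ext fun i j => ?_
    simp only [Matrix.transpose_apply, Matrix.of_apply, matM, auxTau_pow_P,
      Finset.sum_apply, Pi.smul_apply, smul_eq_mul]
    rw [← Fin.sum_univ_eq_sum_range
      (fun a => Polynomial.C ((f^[a] (X i)) ^ ((p^e) ^ (j : ℕ))) * Polynomial.X ^ a) n]
    exact Finset.sum_congr rfl fun a _ => mul_comm _ _
  rw [hMT]
  have expand : Matrix.det (Matrix.of fun i => ∑ a : Fin n,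
        ((Polynomial.X : R[X]) ^ (a : ℕ) •
          fun j : Fin (m+1) => Polynomial.C ((f^[(a : ℕ)] (X i)) ^ ((p^e) ^ (j : ℕ)))))
      = ∑ r : Fin (m+1) → Fin n,
          Matrix.detRowAlternating (fun i =>
            ((Polynomial.X : R[X]) ^ ((r i : ℕ)) •
              fun j : Fin (m+1) => Polynomial.C ((f^[(r i : ℕ)] (X i)) ^ ((p^e) ^ (j : ℕ))))) :=
    MultilinearMap.map_sum
      (Matrix.detRowAlternating (R := R[X]) (n := Fin (m+1))).toMultilinearMap
      (fun i (a : Fin n) => ((Polynomial.X : R[X]) ^ (a : ℕ) •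
        fun j : Fin (m+1) => Polynomial.C ((f^[(a : ℕ)] (X i)) ^ ((p^e) ^ (j : ℕ)))))
  rw [expand]
  have each : ∀ r : Fin (m+1) → Fin n,
      Matrix.detRowAlternating (fun i =>
          ((Polynomial.X : R[X]) ^ ((r i : ℕ)) •
            fun j : Fin (m+1) => Polynomial.C ((f^[(r i : ℕ)] (X i)) ^ ((p^e) ^ (j : ℕ)))))
        = (Polynomial.X : R[X]) ^ (∑ i, (r i : ℕ)) •
            Polynomial.C (moore (p^e) fun i => f^[(r i : ℕ)] (X i)) := by
    intro r
    rw [show Matrix.detRowAlternating (R := R[X]) (fun i =>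
          ((Polynomial.X : R[X]) ^ ((r i : ℕ)) •
            fun j : Fin (m+1) => Polynomial.C ((f^[(r i : ℕ)] (X i)) ^ ((p^e) ^ (j : ℕ)))))
        = (∏ i, (Polynomial.X : R[X]) ^ ((r i : ℕ))) •
            Matrix.detRowAlternating (fun i =>
              fun j : Fin (m+1) => Polynomial.C ((f^[(r i : ℕ)] (X i)) ^ ((p^e) ^ (j : ℕ))))
      from MultilinearMap.map_smul_univ _ _ _]
    rw [Finset.prod_pow_eq_pow_sum]
    congr 1
    show (Matrix.of fun i j : Fin (m+1) =>
        Polynomial.C ((f^[(r i : ℕ)] (X i)) ^ ((p^e) ^ (j : ℕ)))).det = _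
    rw [moore, RingHom.map_det, RingHom.mapMatrix_apply]
    rfl
  rw [Finset.sum_congr rfl fun r _ => each r, Polynomial.finset_sum_coeff, Finset.sum_filter]
  refine Finset.sum_congr rfl fun r _ => ?_
  rw [smul_eq_mul, mul_comm, Polynomial.coeff_C_mul, Polynomial.coeff_X_pow,
    mul_ite, mul_one, mul_zero]
  exact if_congr eq_comm rfl rfl

end Aux

/-- Let `n ≥ 1` and suppose `f^(n)(Xᵢ) = 0` for all `i`. Then `g^(n)(μ_n(X₁, …, X_h)) = 0`. -/
theorem gmap_iterate_mooreN_eq_zero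
    (p e q h n : ℕ) (hp : p.Prime) (he : 1 ≤ e) (hq : q = p ^ e) (hh : 1 ≤ h) (hn : 1 ≤ n)
    (K : Type*) [Field K] [Fintype K] [DecidableEq K] (hK : Fintype.card K = q)
    (R : Type*) [CommRing R] [Algebra K R]
    (π : R) (u : ℕ → R) (X : Fin h → R)
    (hX : ∀ i, (fmap q h π u)^[n] (X i) = 0) :
    (gmap q h π)^[n] (mooreN q h n π u X) = 0 := by
  rcases subsingleton_or_nontrivial R with hR | hR
  · exact Subsingleton.elim _ _
  -- set up the characteristic
  obtain ⟨mK, hr, hcard⟩ := FiniteField.card K (ringChar K)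
  have hpr : p = ringChar K := by
    have hd : p ∣ ringChar K ^ (mK : ℕ) := by
      rw [← hcard, hK, hq]; exact dvd_pow_self p (by omega)
    exact (Nat.prime_dvd_prime_iff_eq hp hr).mp (hp.dvd_of_dvd_pow hd)
  haveI : CharP K p := hpr ▸ ringChar.charP K
  haveI : CharP R p := charP_of_injective_algebraMap (algebraMap K R).injective p
  haveI : Fact p.Prime := ⟨hp⟩
  subst hq
  obtain ⟨m, rfl⟩ : ∃ m, h = m + 1 := ⟨h - 1, (Nat.succ_pred_eq_of_pos hh).symm⟩
  set f := fmap (p ^ e) (m + 1) π u with hf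
  set M := matM p e m n f X with hM
  set N := M.updateRow 0 (fun i => Polynomial.C (X i)) with hN
  set G := gtau (R := R) p e (m + 1) π with hG
  set g := gmap (R := R) (p ^ e) (m + 1) π with hg
  have hq0 : p ^ e ≠ 0 := (pow_pos hp.pos e).ne'
  -- basic properties of `g_τ`
  have hgadd : ∀ F G', G (F + G') = G F + G G' := by
    intro F G'; simp only [hG, gtau, map_add]; ring
  have hgX : ∀ F, G (Polynomial.X * F) = Polynomial.X * G F := by
    intro F; simp only [hG, gtau, map_mul, auxTau_X]; ring
  have hgkadd : ∀ k F G', G^[k] (F + G') = G^[k] F + G^[k] G' := by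
    intro k
    induction k with
    | zero => intro F G'; simp
    | succ k ih =>
        intro F G'
        rw [Function.iterate_succ_apply, hgadd, ih,
          ← Function.iterate_succ_apply, ← Function.iterate_succ_apply]
  have hgkX : ∀ k F, G^[k] (Polynomial.X * F) = Polynomial.X * G^[k] F := by
    intro k
    induction k with
    | zero => intro F; simp
    | succ k ih =>
        intro F
        rw [Function.iterate_succ_apply, hgX, ih, ← Function.iterate_succ_apply]
  have hgcoeff : ∀ (F : Polynomial R) c, (G F).coeff c = g (F.coeff c) := by
    intro F c
    rw [hG, hg]
    simp only [gtau, gmap]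
    rw [show ((-1 : Polynomial R) ^ ((m+1) - 1)) = Polynomial.C ((-1 : R)^((m+1)-1)) by simp]
    rw [Polynomial.coeff_add, Polynomial.coeff_C_mul, Polynomial.coeff_C_mul, auxTau_coeff]
  have hgkcoeff : ∀ k (F : Polynomial R) c, (G^[k] F).coeff c = g^[k] (F.coeff c) := by
    intro k
    induction k with
    | zero => intro F c; simp
    | succ k ih =>
        intro F c
        rw [Function.iterate_succ_apply', Function.iterate_succ_apply', hgcoeff, ih]
  have hg0 : g 0 = 0 := by simp [hg, gmap, zero_pow hq0]
  have hgk0 : ∀ k, g^[k] 0 = 0 := fun k => Function.iterate_fixed hg0 k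
  -- the recurrence and its iteration
  have hrec : M.det = N.det + Polynomial.X * G M.det := det_rec p e m n π u X hX
  have hiter : ∀ k, M.det
      = (∑ j ∈ Finset.range k, Polynomial.X ^ j * G^[j] N.det)
        + Polynomial.X ^ k * G^[k] M.det := by
    intro k
    induction k with
    | zero => simp
    | succ k ih =>
        rw [Finset.sum_range_succ]
        have step : Polynomial.X ^ k * G^[k] M.det
            = Polynomial.X ^ k * G^[k] N.det + Polynomial.X ^ (k+1) * G^[k+1] M.det := by
          conv_lhs => rw [hrec]
          rw [hgkadd, hgkX, ← Function.iterate_succ_apply]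
          ring
        conv_lhs => rw [ih, step]
        ring
  -- degree bounds
  have hdegM : (M.det).coeff (m * (n-1) + n) = 0 := by
    refine coeff_det_eq_zero M (fun _ => n - 1) (fun j i => ?_) _ ?_
    · rw [hM]; exact matM_natDegree_le p e m n f X j i
    · simp only [Finset.sum_const, Finset.card_univ, Fintype.card_fin, smul_eq_mul]
      rw [add_mul, one_mul]
      omega
  have hdegN : ∀ c, m * (n-1) < c → (N.det).coeff c = 0 := by
    intro c hc
    refine coeff_det_eq_zero N (fun j => if j = 0 then 0 else n - 1) (fun j i => ?_) _ ?_
    · show (N j i).natDegree ≤ (if j = 0 then 0 else n - 1)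
      rcases eq_or_ne j 0 with rfl | hj
      · simp [hN, Polynomial.natDegree_C]
      · rw [if_neg hj, hN]
        simp only [Matrix.updateRow_ne hj]
        rw [hM]
        exact matM_natDegree_le p e m n f X j i
    · have hsum : (∑ j : Fin (m+1), if j = (0 : Fin (m+1)) then 0 else n - 1)
          = m * (n-1) := by
        rw [Fin.sum_univ_succ]
        simp [Fin.succ_ne_zero, Finset.sum_const, mul_comm]
      rw [hsum]
      exact hc
  -- the coefficient of interest
  have h6 : (M.det).coeff (m * (n-1)) = mooreN (p^e) (m+1) n π u X := by
    rw [hM, coeff_det_matM p e m n f X (m * (n-1))]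
    simp only [mooreN, Nat.add_sub_cancel]
    rfl
  -- final assembly
  have hfin : ((∑ j ∈ Finset.range n, Polynomial.X ^ j * G^[j] N.det)
      + Polynomial.X ^ n * G^[n] M.det).coeff (m*(n-1) + n) = 0 := by
    rw [← hiter n]; exact hdegM
  rw [Polynomial.coeff_add, Polynomial.finset_sum_coeff] at hfin
  have hterm : ∀ j ∈ Finset.range n,
      (Polynomial.X ^ j * G^[j] N.det).coeff (m*(n-1) + n) = 0 := by
    intro j hj
    have hj' := Finset.mem_range.mp hj
    rw [show m*(n-1) + n = (m*(n-1) + (n - j)) + j by omega, Polynomial.coeff_X_pow_mul,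
      hgkcoeff, hdegN _ (by omega), hgk0]
  have hlast : (Polynomial.X ^ n * G^[n] M.det).coeff (m*(n-1) + n)
      = g^[n] (mooreN (p^e) (m+1) n π u X) := by
    rw [Polynomial.coeff_X_pow_mul, hgkcoeff, h6]
  rw [Finset.sum_eq_zero hterm, hlast, zero_add] at hfin
  exact hfin

end
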